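/- Let K be a field, n, t ≥ 1, and A ∈ K^{nt×nt}. Suppose that the identity [B, AB, …, A^{n-1} B] G = [G, AG, …, A^{n-1} G] B holds for all blockwise commuting B, G ∈ K^{nt×t}. Then R(A, E_0) = I_{nt}, and consequently A = F_P for some P ∈ K^{nt×t}. -/

import Mathlib

open Matrix

/-- The second block companion matrix `F_P` associated with the stacked blocks
`P = [P_0; …; P_{n-1}] ∈ K^{nt×t}`: the `(i,j)` block (of size `t×t`) is `I_t` if
`i = j+1`, `P_i` if `j = n-1`, and `0` otherwise. -/
def bcompanion {K : Type*} [Field K] {n t : ℕ}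
    (P : Matrix (Fin (n + 1) × Fin t) (Fin t) K) :
    Matrix (Fin (n + 1) × Fin t) (Fin (n + 1) × Fin t) K :=
  Matrix.of fun r s =>
    if s.1 = Fin.last n then P r s.2
    else if (r.1 : ℕ) = (s.1 : ℕ) + 1 ∧ r.2 = s.2 then 1 else 0

/-- The `n`-step reachability matrix `R(A, G) = [G, AG, …, A^{n-1} G] ∈ K^{nt×nm}`. -/
def bkrylov {K : Type*} [Field K] {n t m : ℕ}
    (A : Matrix (Fin (n + 1) × Fin t) (Fin (n + 1) × Fin t) K)
    (G : Matrix (Fin (n + 1) × Fin t) (Fin m) K) :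
    Matrix (Fin (n + 1) × Fin t) (Fin (n + 1) × Fin m) K :=
  Matrix.of fun r s => (A ^ (s.1 : ℕ) * G) r s.2

/-- `E_i = e_i ⊗ I_t ∈ K^{nt×t}`. -/
def Eblk {K : Type*} [Field K] {n t : ℕ} (i : Fin (n + 1)) :
    Matrix (Fin (n + 1) × Fin t) (Fin t) K :=
  Matrix.of fun r c => if r.1 = i ∧ r.2 = c then 1 else 0

/-- `I_n ⊗ G_i ∈ K^{nt×nm}`, where `G_i` is the `i`-th block of
`G = [G_0; …; G_{n-1}] ∈ K^{nt×m}`. -/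
def blockDiag {K : Type*} [Field K] {n t m : ℕ}
    (G : Matrix (Fin (n + 1) × Fin t) (Fin m) K) (i : Fin (n + 1)) :
    Matrix (Fin (n + 1) × Fin t) (Fin (n + 1) × Fin m) K :=
  Matrix.of fun r s => if r.1 = s.1 then G (i, r.2) s.2 else 0

/-- The operator substitution `G(A) = Σ_{i=0}^{n-1} A^i (I_n ⊗ G_i) ∈ K^{nt×nm}`. -/
def bpolyEval {K : Type*} [Field K] {n t m : ℕ}
    (G : Matrix (Fin (n + 1) × Fin t) (Fin m) K)
    (A : Matrix (Fin (n + 1) × Fin t) (Fin (n + 1) × Fin t) K) :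
    Matrix (Fin (n + 1) × Fin t) (Fin (n + 1) × Fin m) K :=
  ∑ i : Fin (n + 1), A ^ (i : ℕ) * blockDiag G i

/-- The `i`-th block `B_i ∈ K^{t×t}` of a stacked matrix `B = [B_0; …; B_{n-1}]`. -/
def blk {K : Type*} [Field K] {n t : ℕ} (B : Matrix (Fin (n + 1) × Fin t) (Fin t) K)
    (i : Fin (n + 1)) : Matrix (Fin t) (Fin t) K :=
  Matrix.of fun a b => B (i, a) b

/-- `B` and `G` are blockwise commuting: `B_i G_j = G_j B_i` for all `i, j`. -/
def BlockwiseComm {K : Type*} [Field K] {n t : ℕ}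
    (B G : Matrix (Fin (n + 1) × Fin t) (Fin t) K) : Prop :=
  ∀ i j : Fin (n + 1), blk B i * blk G j = blk G j * blk B i

lemma mulEblk {K : Type*} [Field K] {n t : ℕ} {α : Type*} [Fintype α]
    (X : Matrix α (Fin (n + 1) × Fin t) K) (j : Fin (n + 1)) (r : α) (a : Fin t) :
    (X * (Eblk j : Matrix (Fin (n + 1) × Fin t) (Fin t) K) : Matrix α (Fin t) K) r a = X r (j, a) := by
  simp only [Matrix.mul_apply, Eblk, Matrix.of_apply]
  rw [Fintype.sum_prod_type]
  simp [ite_and, Finset.sum_ite_eq', Finset.sum_ite_eq]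

lemma blkEblk0 {K : Type*} [Field K] {n t : ℕ} (i : Fin (n + 1)) :
    blk (Eblk (0 : Fin (n + 1)) : Matrix (Fin (n + 1) × Fin t) (Fin t) K) i
      = if i = 0 then 1 else 0 := by
  ext a b
  by_cases hi : i = 0 <;> simp [blk, Eblk, hi, Matrix.one_apply, eq_comm]

lemma comm0 {K : Type*} [Field K] {n t : ℕ}
    (G : Matrix (Fin (n + 1) × Fin t) (Fin t) K) :
    BlockwiseComm (Eblk (0 : Fin (n + 1))) G := by
  intro i j
  rw [blkEblk0]
  by_cases hi : i = 0 <;> simp [hi]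

/-- If `[B, AB, …, A^{n-1}B] G = [G, AG, …, A^{n-1}G] B` for all blockwise commuting
`B, G ∈ K^{nt×t}`, then `R(A, E_0) = I_{nt}`, and consequently `A = F_P` for some
`P ∈ K^{nt×t}`. -/
theorem bcompanion_of_blockwise_symm {K : Type*} [Field K] {n t : ℕ} (ht : 0 < t)
    (A : Matrix (Fin (n + 1) × Fin t) (Fin (n + 1) × Fin t) K)
    (h : ∀ B G : Matrix (Fin (n + 1) × Fin t) (Fin t) K, BlockwiseComm B G →
      bkrylov A B * G = bkrylov A G * B) :
    bkrylov A (Eblk (0 : Fin (n + 1))) = 1 ∧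
      ∃ P : Matrix (Fin (n + 1) × Fin t) (Fin t) K, A = bcompanion P := by
  have hB : ∀ G : Matrix (Fin (n + 1) × Fin t) (Fin t) K,
      bkrylov A (Eblk (0 : Fin (n + 1))) * G = G := by
    intro G
    rw [h (Eblk 0) G (comm0 G)]
    ext r c
    rw [mulEblk]
    simp [bkrylov]
  have hM : bkrylov A (Eblk (0 : Fin (n + 1))) = 1 := by
    ext r s
    set Gs : Matrix (Fin (n + 1) × Fin t) (Fin t) K :=
      Matrix.of fun r' _ => if r' = s then 1 else 0 with hGs
    have h1 : (bkrylov A (Eblk (0 : Fin (n + 1))) * Gs) r ⟨0, ht⟩ = Gs r ⟨0, ht⟩ := by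
      rw [hB Gs]
    simp only [Matrix.mul_apply, hGs, Matrix.of_apply, mul_ite, mul_one, mul_zero,
      Finset.sum_ite_eq', Finset.mem_univ, if_true] at h1
    rw [h1, Matrix.one_apply]
  refine ⟨hM, ?_⟩
  have hpow : ∀ j : Fin (n + 1),
      A ^ (j : ℕ) * (Eblk (0 : Fin (n + 1)) : Matrix (Fin (n + 1) × Fin t) (Fin t) K)
        = (Eblk j : Matrix (Fin (n + 1) × Fin t) (Fin t) K) := by
    intro j
    ext r a
    have := congrFun (congrFun hM r) (j, a)
    simp only [bkrylov, Matrix.of_apply] at this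
    rw [this, Matrix.one_apply]
    simp [Eblk, Prod.ext_iff]
  have key : ∀ (r : Fin (n + 1) × Fin t) (j : Fin (n + 1)) (a : Fin t),
      A r (j, a)
        = (A ^ ((j : ℕ) + 1) * (Eblk (0 : Fin (n + 1)) : Matrix (Fin (n + 1) × Fin t) (Fin t) K)
            : Matrix (Fin (n + 1) × Fin t) (Fin t) K) r a := by
    intro r j a
    rw [← mulEblk A j r a, ← hpow j, ← Matrix.mul_assoc, ← pow_succ']
  refine ⟨A ^ (n + 1) * (Eblk (0 : Fin (n + 1)) : Matrix (Fin (n + 1) × Fin t) (Fin t) K), ?_⟩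
  ext r s
  obtain ⟨j, a⟩ := s
  rw [key r j a]
  by_cases hj : j = Fin.last n
  · subst hj
    simp [bcompanion, Fin.val_last]
  · have hjn : (j : ℕ) < n := Fin.val_lt_last hj
    have h2 : (A ^ ((j : ℕ) + 1) * (Eblk (0 : Fin (n + 1)) : Matrix (Fin (n + 1) × Fin t) (Fin t) K)
          : Matrix (Fin (n + 1) × Fin t) (Fin t) K) r a
        = Eblk (⟨(j : ℕ) + 1, by omega⟩ : Fin (n + 1)) r a :=
      congrFun (congrFun (hpow ⟨(j : ℕ) + 1, by omega⟩) r) a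
    rw [h2]
    simp only [bcompanion, Eblk, Matrix.of_apply, if_neg hj]
    simp only [Fin.ext_iff, Fin.val_mk]
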